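/- Let q be a power of 2 and k ≥ 1 an integer. Then A(2k, k, k-1) = q^k · A(2k, k, k); that is, over a finite field of even characteristic the number of [2k,k] codes with hull dimension k-1 is exactly q^k times the number of self-dual [2k,k] codes. -/

import Mathlib

/-- The (Euclidean) dual of a linear code `C ⊆ F^n`:
all vectors `y` with `∑ i, x i * y i = 0` for every `x ∈ C`. -/
def dualCode {F : Type*} [Field F] {n : ℕ} (C : Submodule F (Fin n → F)) :
    Submodule F (Fin n → F) where
  carrier := {y | ∀ x ∈ C, ∑ i, x i * y i = 0}
  zero_mem' := by intro x hx; simp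
  add_mem' := by
    intro a b ha hb x hx
    simp only [Set.mem_setOf_eq] at ha hb
    simp [Pi.add_apply, mul_add, Finset.sum_add_distrib, ha x hx, hb x hx]
  smul_mem' := by
    intro c a ha x hx
    simp only [Set.mem_setOf_eq] at ha
    simp [Pi.smul_apply, smul_eq_mul, mul_left_comm, ← Finset.mul_sum, ha x hx]

/-- The dimension of the hull `C ∩ C⊥` of a linear code. -/
noncomputable def hullDim {F : Type*} [Field F] {n : ℕ} (C : Submodule F (Fin n → F)) : ℕ :=
  Module.finrank F ↥(C ⊓ dualCode C)

/-- `numCodes F n k ℓ` is the number of `k`-dimensional linear codes in `F^n`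
whose hull has dimension `ℓ`. -/
noncomputable def numCodes (F : Type*) [Field F] (n k ℓ : ℕ) : ℕ :=
  Nat.card {C : Submodule F (Fin n → F) // Module.finrank F ↥C = k ∧ hullDim C = ℓ}

set_option linter.unusedSectionVars false

open Module LinearMap Submodule

section Dual
variable (F : Type*) [Field F] (n : ℕ)

def Bf : LinearMap.BilinForm F (Fin n → F) :=
  LinearMap.mk₂ F (fun x y => ∑ i, x i * y i)
    (by intro x x' y; simp [add_mul, Finset.sum_add_distrib])
    (by intro a x y; simp [Finset.mul_sum, mul_assoc])
    (by intro x y y'; simp [mul_add, Finset.sum_add_distrib])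
    (by intro a x y; simp [Finset.mul_sum, mul_left_comm])

variable {F n}

lemma Bf_apply (x y : Fin n → F) : Bf F n x y = ∑ i, x i * y i := rfl
lemma Bf_symm (x y : Fin n → F) : Bf F n x y = Bf F n y x := by simp [Bf_apply, mul_comm]
lemma Bf_isRefl : (Bf F n).IsRefl := by intro x y h; rwa [← Bf_symm]
lemma Bf_nondeg : (Bf F n).Nondegenerate := by
  refine (LinearMap.IsRefl.nondegenerate_iff_separatingLeft (B := Bf F n) (Bf_isRefl (F := F) (n := n))).mpr ?_
  intro x hx
  funext i
  have := hx (Pi.single i 1)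
  simpa [Bf_apply, Pi.single_apply, Finset.sum_ite_eq', mul_comm] using this

lemma mem_dualCode {C : Submodule F (Fin n → F)} {y : Fin n → F} :
    y ∈ dualCode C ↔ ∀ x ∈ C, Bf F n x y = 0 := Iff.rfl

lemma dualCode_eq (C : Submodule F (Fin n → F)) : dualCode C = (Bf F n).orthogonal C := by
  ext y
  simp [mem_dualCode, LinearMap.BilinForm.mem_orthogonal_iff, LinearMap.BilinForm.IsOrtho]

lemma finrank_dualCode (C : Submodule F (Fin n → F)) :
    finrank F (dualCode C) = n - finrank F C := by
  rw [dualCode_eq, LinearMap.BilinForm.finrank_orthogonal Bf_nondeg, finrank_pi]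
  simp

end Dual

section Char2
variable {F : Type*} [Field F] [CharP F 2] {k : ℕ}

lemma Bf_self (x : Fin (2*k) → F) : Bf F (2*k) x x = (∑ i, x i) * (∑ i, x i) := by
  rw [Bf_apply]; exact (CharTwo.sum_mul_self _ _).symm

lemma sum_eq_zero_of_hull {C : Submodule F (Fin (2*k) → F)} {x : Fin (2*k) → F}
    (hx : x ∈ C) (hx' : x ∈ dualCode C) : ∑ i, x i = 0 := by
  have : Bf F (2*k) x x = 0 := hx' x hx
  rw [Bf_self] at this
  exact mul_self_eq_zero.mp this

lemma pi_one_ne_zero (hk : 1 ≤ k) : (1 : Fin (2*k) → F) ≠ 0 := by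
  intro h
  have := congr_fun h ⟨0, by omega⟩
  simp at this

lemma sum_one : (∑ _i : Fin (2*k), (1:F)) = 0 := by
  simp only [Finset.sum_const, Finset.card_univ, Fintype.card_fin, nsmul_eq_mul, mul_one]
  have : ((2*k : ℕ) : F) = 2 * k := by push_cast; ring
  rw [this, show ((2:F)) = ((2:ℕ):F) by norm_num, CharP.cast_eq_zero F 2]
  ring

lemma exists_norm (hk : 1 ≤ k) {C : Submodule F (Fin (2*k) → F)}
    (h1 : finrank F C = k) (h2 : finrank F (C ⊓ dualCode C : Submodule F _) = k - 1) :
    ∃ c ∈ C, ∑ i, c i = 1 := by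
  -- first find c ∈ C with nonzero coordinate sum
  suffices h : ∃ c ∈ C, (∑ i, c i) ≠ 0 by
    obtain ⟨c, hc, hs⟩ := h
    refine ⟨(∑ i, c i)⁻¹ • c, Submodule.smul_mem _ _ hc, ?_⟩
    simp only [Pi.smul_apply, smul_eq_mul, ← Finset.mul_sum]
    exact inv_mul_cancel₀ hs
  by_contra hno
  push_neg at hno
  -- then B is alternating on C
  have halt : ∀ x ∈ C, Bf F (2*k) x x = 0 := by
    intro x hx; rw [Bf_self, hno x hx, mul_zero]
  -- hull is a proper subspace of C
  have hlt : (C ⊓ dualCode C : Submodule F _) < C := by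
    refine lt_of_le_of_ne inf_le_left ?_
    intro h
    rw [h, h1] at h2
    omega
  obtain ⟨c, hcC, hcH⟩ := SetLike.exists_of_lt hlt
  have hcd : c ∉ dualCode C := fun h => hcH ⟨hcC, h⟩
  rw [mem_dualCode] at hcd
  push_neg at hcd
  obtain ⟨x, hxC, hxc⟩ := hcd
  -- C = hull ⊔ span c
  have hcne : c ≠ 0 := by rintro rfl; exact hcH (Submodule.zero_mem _)
  have hinf : (C ⊓ dualCode C : Submodule F _) ⊓ (Submodule.span F {c}) = ⊥ := by
    rw [Submodule.eq_bot_iff]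
    rintro y ⟨hy1, hy2⟩
    obtain ⟨t, rfl⟩ := Submodule.mem_span_singleton.mp hy2
    rcases eq_or_ne t 0 with rfl | ht
    · simp
    · exact absurd ((Submodule.smul_mem_iff _ ht).mp hy1) hcH
  have hCsup : (C ⊓ dualCode C : Submodule F _) ⊔ Submodule.span F {c} = C := by
    have hle : (C ⊓ dualCode C : Submodule F _) ⊔ Submodule.span F {c} ≤ C :=
      sup_le inf_le_left ((Submodule.span_singleton_le_iff_mem _ _).mpr hcC)
    refine Submodule.eq_of_le_of_finrank_le hle ?_
    have := Submodule.finrank_sup_add_finrank_inf_eq (C ⊓ dualCode C : Submodule F _)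
      (Submodule.span F {c})
    rw [hinf, finrank_bot, finrank_span_singleton hcne, h2] at this
    omega
  -- write x = h + t • c and compute B x c = 0, contradiction
  rw [← hCsup] at hxC
  obtain ⟨h, hh, s, hs, rfl⟩ := Submodule.mem_sup.mp hxC
  obtain ⟨t, rfl⟩ := Submodule.mem_span_singleton.mp hs
  apply hxc
  have h1' : Bf F (2*k) h c = 0 := Bf_isRefl _ _ (hh.2 c hcC)
  have h2' : Bf F (2*k) c c = 0 := halt c hcC
  simp [map_add, h1', h2', LinearMap.add_apply, LinearMap.smul_apply]
end Char2

section Generic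
variable {F : Type*} [Field F] {V : Type*} [AddCommGroup V] [Module F V] [FiniteDimensional F V]

lemma sup_rank {W : Submodule F V} {v : V} (hv : v ∉ W) (hvne : v ≠ 0) :
    finrank F (W ⊔ Submodule.span F {v} : Submodule F V) = finrank F W + 1 := by
  have hinf : W ⊓ Submodule.span F {v} = ⊥ := by
    rw [Submodule.eq_bot_iff]
    rintro y ⟨hy1, hy2⟩
    obtain ⟨t, rfl⟩ := Submodule.mem_span_singleton.mp hy2
    rcases eq_or_ne t 0 with rfl | ht
    · simp
    · exact absurd ((Submodule.smul_mem_iff _ ht).mp hy1) hv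
  have := Submodule.finrank_sup_add_finrank_inf_eq W (Submodule.span F {v})
  rw [hinf, finrank_bot, finrank_span_singleton hvne] at this
  omega

lemma finrank_inf_ker (W : Submodule F V) (f : V →ₗ[F] F) {w₀ : V}
    (hw : w₀ ∈ W) (hfw : f w₀ = 1) :
    finrank F (W ⊓ LinearMap.ker f : Submodule F V) + 1 = finrank F W := by
  have hrange : LinearMap.range f = ⊤ := by
    rw [LinearMap.range_eq_top]
    intro a
    exact ⟨a • w₀, by simp [hfw]⟩
  have hker : finrank F (LinearMap.ker f) + 1 = finrank F V := by
    have := LinearMap.finrank_range_add_finrank_ker f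
    rw [hrange, finrank_top, finrank_self] at this
    omega
  have hsup : W ⊔ LinearMap.ker f = ⊤ := by
    rw [eq_top_iff]
    intro v _
    have hv : v - f v • w₀ ∈ LinearMap.ker f := by simp [hfw]
    have : v = f v • w₀ + (v - f v • w₀) := by abel
    rw [this]
    exact add_mem (Submodule.mem_sup_left (Submodule.smul_mem _ _ hw))
      (Submodule.mem_sup_right hv)
  have := Submodule.finrank_sup_add_finrank_inf_eq W (LinearMap.ker f)
  rw [hsup, finrank_top] at this
  have h1 : finrank F W ≤ finrank F V := Submodule.finrank_le W
  have h2 : finrank F (LinearMap.ker f) ≤ finrank F V := Submodule.finrank_le _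
  omega
end Generic

section Maps
variable {F : Type*} [Field F] [CharP F 2] {k : ℕ}

lemma fwd (hk : 1 ≤ k) {C : Submodule F (Fin (2*k) → F)} {c : Fin (2*k) → F}
    (h1 : finrank F C = k) (h2 : finrank F (C ⊓ dualCode C : Submodule F _) = k - 1)
    (hc : c ∈ C) (hLc : ∑ i, c i = 1) :
    finrank F ((C ⊓ dualCode C) ⊔ Submodule.span F {1} : Submodule F _) = k ∧
    (((C ⊓ dualCode C) ⊔ Submodule.span F {1} : Submodule F _) ⊓
      dualCode ((C ⊓ dualCode C) ⊔ Submodule.span F {1} : Submodule F _))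
      = ((C ⊓ dualCode C) ⊔ Submodule.span F {1} : Submodule F _) := by
  set H : Submodule F (Fin (2*k) → F) := C ⊓ dualCode C with hHdef
  have honeH : (1 : Fin (2*k) → F) ∉ H := by
    intro hmem
    have h0 := hmem.2 c hc
    simp only [Pi.one_apply, mul_one] at h0
    rw [hLc] at h0
    exact one_ne_zero h0
  have hD : finrank F (H ⊔ Submodule.span F {1} : Submodule F _) = k := by
    rw [sup_rank honeH (pi_one_ne_zero hk), h2]
    omega
  refine ⟨hD, ?_⟩
  rw [inf_eq_left]
  intro y hy
  rw [mem_dualCode]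
  intro x hx
  obtain ⟨h, hh, s', hs', rfl⟩ := Submodule.mem_sup.mp hx
  obtain ⟨s, rfl⟩ := Submodule.mem_span_singleton.mp hs'
  obtain ⟨h', hh', t', ht', rfl⟩ := Submodule.mem_sup.mp hy
  obtain ⟨t, rfl⟩ := Submodule.mem_span_singleton.mp ht'
  have e1 : Bf F (2*k) h h' = 0 := hh'.2 h hh.1
  have e2 : Bf F (2*k) h (1 : Fin (2*k) → F) = 0 := by
    rw [Bf_apply]
    simpa using sum_eq_zero_of_hull hh.1 hh.2
  have e3 : Bf F (2*k) (1 : Fin (2*k) → F) h' = 0 := by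
    rw [Bf_apply]
    simpa using sum_eq_zero_of_hull hh'.1 hh'.2
  have e4 : Bf F (2*k) (1 : Fin (2*k) → F) (1 : Fin (2*k) → F) = 0 := by
    rw [Bf_apply]
    simpa using (sum_one (F := F) (k := k))
  have : Bf F (2*k) (h + s • (1 : Fin (2*k) → F)) (h' + t • (1 : Fin (2*k) → F)) = 0 := by
    simp only [map_add, LinearMap.map_smul, LinearMap.add_apply, LinearMap.smul_apply,
      map_smul, smul_eq_mul, e1, e2, e3, e4]
    ring
  exact this

lemma bwd (hk : 1 ≤ k) {D : Submodule F (Fin (2*k) → F)} {c : Fin (2*k) → F}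
    (h1 : finrank F D = k) (h2 : finrank F (D ⊓ dualCode D : Submodule F _) = k)
    (hLc : ∑ i, c i = 1) :
    finrank F ((D ⊓ LinearMap.ker (Bf F (2*k) c)) ⊔ Submodule.span F {c} : Submodule F _) = k ∧
    finrank F ((((D ⊓ LinearMap.ker (Bf F (2*k) c)) ⊔ Submodule.span F {c} : Submodule F _) ⊓
      dualCode ((D ⊓ LinearMap.ker (Bf F (2*k) c)) ⊔ Submodule.span F {c} : Submodule F _)) :
        Submodule F _) = k - 1 ∧
    c ∈ ((D ⊓ LinearMap.ker (Bf F (2*k) c)) ⊔ Submodule.span F {c} : Submodule F _) ∧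
    ((((D ⊓ LinearMap.ker (Bf F (2*k) c)) ⊔ Submodule.span F {c} : Submodule F _) ⊓
      dualCode ((D ⊓ LinearMap.ker (Bf F (2*k) c)) ⊔ Submodule.span F {c} : Submodule F _))
      ⊔ Submodule.span F {(1 : Fin (2*k) → F)}) = D := by
  have hDD : dualCode D = D := by
    have hinf3 : D ⊓ dualCode D ≤ D := inf_le_left
    have hinfD : D ⊓ dualCode D = D :=
      Submodule.eq_of_le_of_finrank_le hinf3 (by omega)
    have hle : D ≤ dualCode D := le_trans hinfD.ge inf_le_right
    refine (Submodule.eq_of_le_of_finrank_le hle ?_).symm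
    rw [finrank_dualCode]
    omega
  have hBxx : ∀ x ∈ D, ∑ i, x i = 0 := fun x hx =>
    sum_eq_zero_of_hull hx (show x ∈ dualCode D by rw [hDD]; exact hx)
  have hone : (1 : Fin (2*k) → F) ∈ D := by
    rw [← hDD, mem_dualCode]
    intro x hx
    rw [Bf_apply]
    simpa using hBxx x hx
  have hfc1 : Bf F (2*k) c (1 : Fin (2*k) → F) = 1 := by
    rw [Bf_apply]
    simpa using hLc
  set H : Submodule F (Fin (2*k) → F) := D ⊓ LinearMap.ker (Bf F (2*k) c) with hHdef
  have hH : finrank F H + 1 = k := by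
    rw [finrank_inf_ker D (Bf F (2*k) c) hone hfc1]
    exact h1
  have hcc : Bf F (2*k) c c = 1 := by rw [Bf_self, hLc]; ring
  have hcH : c ∉ H := by
    intro h
    have : Bf F (2*k) c c = 0 := LinearMap.mem_ker.mp h.2
    rw [hcc] at this
    exact one_ne_zero this
  have hcne : c ≠ 0 := by
    rintro rfl
    rw [Bf_apply] at hcc
    simp at hcc
  set Cn : Submodule F (Fin (2*k) → F) := H ⊔ Submodule.span F {c} with hCdef
  have hcC : c ∈ Cn := Submodule.mem_sup_right (Submodule.mem_span_singleton_self c)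
  have hCrank : finrank F Cn = k := by
    rw [hCdef, sup_rank hcH hcne]
    omega
  have hHledual : H ≤ dualCode Cn := by
    intro h' hh'
    rw [mem_dualCode]
    intro x hx
    obtain ⟨h, hh, s', hs', rfl⟩ := Submodule.mem_sup.mp hx
    obtain ⟨s, rfl⟩ := Submodule.mem_span_singleton.mp hs'
    have hh'd : h' ∈ dualCode D := by rw [hDD]; exact hh'.1
    have e1 : Bf F (2*k) h h' = 0 := hh'd h hh.1
    have e2 : Bf F (2*k) c h' = 0 := LinearMap.mem_ker.mp hh'.2
    have : Bf F (2*k) (h + s • c) h' = 0 := by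
      simp only [map_add, LinearMap.map_smul, LinearMap.add_apply, LinearMap.smul_apply,
        smul_eq_mul, e1, e2]
      ring
    exact this
  have hcnd : c ∉ dualCode Cn := by
    intro h
    have := h c hcC
    rw [show (∑ i, c i * c i) = Bf F (2*k) c c from rfl, hcc] at this
    exact one_ne_zero this
  have hhull : Cn ⊓ dualCode Cn = H := by
    have hle2 : H ≤ Cn ⊓ dualCode Cn := le_inf le_sup_left hHledual
    have hlt : Cn ⊓ dualCode Cn < Cn := by
      refine lt_of_le_of_ne inf_le_left ?_
      intro heq
      exact hcnd (show c ∈ Cn ⊓ dualCode Cn by rw [heq]; exact hcC).2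
    have hfr : finrank F (Cn ⊓ dualCode Cn : Submodule F _) < k := by
      have := Submodule.finrank_lt_finrank_of_lt hlt
      omega
    exact (Submodule.eq_of_le_of_finrank_le hle2 (by omega)).symm
  refine ⟨hCrank, by rw [hhull]; omega, hcC, ?_⟩
  rw [hhull]
  have honeH : (1 : Fin (2*k) → F) ∉ H := by
    intro h
    have : Bf F (2*k) c (1 : Fin (2*k) → F) = 0 := LinearMap.mem_ker.mp h.2
    rw [hfc1] at this
    exact one_ne_zero this
  have hle3 : H ⊔ Submodule.span F {(1 : Fin (2*k) → F)} ≤ D :=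
    sup_le inf_le_left ((Submodule.span_singleton_le_iff_mem _ _).mpr hone)
  refine Submodule.eq_of_le_of_finrank_le hle3 ?_
  rw [sup_rank honeH (pi_one_ne_zero hk)]
  omega

lemma fwd_bwd (hk : 1 ≤ k) {C : Submodule F (Fin (2*k) → F)} {c : Fin (2*k) → F}
    (h1 : finrank F C = k) (h2 : finrank F (C ⊓ dualCode C : Submodule F _) = k - 1)
    (hc : c ∈ C) (hLc : ∑ i, c i = 1) :
    ((((C ⊓ dualCode C) ⊔ Submodule.span F {(1 : Fin (2*k) → F)}) ⊓
      LinearMap.ker (Bf F (2*k) c)) ⊔ Submodule.span F {c}) = C := by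
  set H : Submodule F (Fin (2*k) → F) := C ⊓ dualCode C with hHdef
  set D : Submodule F (Fin (2*k) → F) := H ⊔ Submodule.span F {1} with hDdef
  have honeH : (1 : Fin (2*k) → F) ∉ H := by
    intro hmem
    have h0 := hmem.2 c hc
    simp only [Pi.one_apply, mul_one] at h0
    rw [hLc] at h0
    exact one_ne_zero h0
  have hone : (1 : Fin (2*k) → F) ∈ D :=
    Submodule.mem_sup_right (Submodule.mem_span_singleton_self _)
  have hfc1 : Bf F (2*k) c (1 : Fin (2*k) → F) = 1 := by
    rw [Bf_apply]
    simpa using hLc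
  have hDrank : finrank F D = k := by
    rw [hDdef, sup_rank honeH (pi_one_ne_zero hk), h2]
    omega
  have hHle : H ≤ D ⊓ LinearMap.ker (Bf F (2*k) c) := by
    refine le_inf le_sup_left ?_
    intro h hh
    exact LinearMap.mem_ker.mpr (hh.2 c hc)
  have hinfrank : finrank F (D ⊓ LinearMap.ker (Bf F (2*k) c) : Submodule F _) + 1 = k := by
    rw [finrank_inf_ker D (Bf F (2*k) c) hone hfc1]
    exact hDrank
  have hHeq : H = D ⊓ LinearMap.ker (Bf F (2*k) c) :=
    Submodule.eq_of_le_of_finrank_le hHle (by omega)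
  rw [← hHeq]
  have hcc : Bf F (2*k) c c = 1 := by rw [Bf_self, hLc]; ring
  have hcH : c ∉ H := by
    intro h
    have h0 : Bf F (2*k) c c = 0 := h.2 c hc
    rw [hcc] at h0
    exact one_ne_zero h0
  have hcne : c ≠ 0 := by
    rintro rfl
    rw [Bf_apply] at hcc
    simp at hcc
  refine Submodule.eq_of_le_of_finrank_le
    (sup_le inf_le_left ((Submodule.span_singleton_le_iff_mem _ _).mpr hc)) ?_
  rw [sup_rank hcH hcne]
  omega

end Maps

section Counting
variable {F : Type*} [Field F] [Fintype F]

/-- The coordinate-sum functional. -/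
def Lsum (F : Type*) [Field F] (n : ℕ) : (Fin n → F) →ₗ[F] F where
  toFun x := ∑ i, x i
  map_add' := by intros; simp [Finset.sum_add_distrib]
  map_smul' := by intros; simp [Finset.mul_sum]

lemma Lsum_apply {n : ℕ} (x : Fin n → F) : Lsum F n x = ∑ i, x i := rfl

variable {V : Type*} [AddCommGroup V] [Module F V] [FiniteDimensional F V] [Finite V]

lemma card_norm (W : Submodule F V) (f : V →ₗ[F] F) {w₀ : V}
    (hw : w₀ ∈ W) (hfw : f w₀ = 1) :
    Nat.card {c : V // c ∈ W ∧ f c = 1} = Fintype.card F ^ (finrank F W - 1) := by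
  have e : {c : V // c ∈ W ∧ f c = 1} ≃ ↥(W ⊓ LinearMap.ker f) :=
    { toFun := fun c => ⟨c.1 - w₀, ⟨sub_mem c.2.1 hw, by simp [LinearMap.mem_ker, c.2.2, hfw]⟩⟩
      invFun := fun y => ⟨y.1 + w₀, add_mem y.2.1 hw, by
        have : f y.1 = 0 := y.2.2
        simp [this, hfw]⟩
      left_inv := fun c => by ext; simp
      right_inv := fun y => by ext; simp }
  rw [Nat.card_congr e]
  haveI : Fintype ↥(W ⊓ LinearMap.ker f) := Fintype.ofFinite _
  haveI : Fintype V := Fintype.ofFinite V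
  rw [Nat.card_eq_fintype_card, card_eq_pow_finrank (K := F)]
  congr 1
  have := finrank_inf_ker W f hw hfw
  omega

lemma nat_card_sigma_const {α : Type*} {f : α → Type*} [Finite α] [∀ a, Finite (f a)] {m : ℕ}
    (h : ∀ a, Nat.card (f a) = m) : Nat.card (Σ a, f a) = Nat.card α * m := by
  haveI := Fintype.ofFinite α
  haveI : ∀ a, Fintype (f a) := fun a => Fintype.ofFinite _
  simp only [Nat.card_eq_fintype_card, Fintype.card_sigma]
  have : ∀ a : α, Fintype.card (f a) = m := by
    intro a; rw [← Nat.card_eq_fintype_card, h]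
  simp [this, Finset.sum_const, Finset.card_univ, mul_comm]

end Counting

theorem stmt11 (F : Type*) [Field F] [Fintype F] (q k : ℕ)
    (hq : Fintype.card F = q) (hq2 : ∃ m : ℕ, q = 2 ^ m) (hk : 1 ≤ k) :
    numCodes F (2 * k) k (k - 1) = q ^ k * numCodes F (2 * k) k k := by
  classical
  obtain ⟨m, hm⟩ := hq2
  have hq2' : 2 ≤ q := hq ▸ Fintype.one_lt_card
  -- characteristic 2
  have hchar2 : ringChar F = 2 := by
    have hdvd : ringChar F ∣ q := by
      rw [← hq]
      exact ringChar.dvd (FiniteField.cast_card_eq_zero F)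
    have hprime : (ringChar F).Prime := CharP.char_is_prime F (ringChar F)
    rw [hm] at hdvd
    exact (Nat.prime_dvd_prime_iff_eq hprime Nat.prime_two).mp (hprime.dvd_of_dvd_pow hdvd)
  haveI : CharP F 2 := hchar2 ▸ ringChar.charP F
  haveI : Finite (Submodule F (Fin (2*k) → F)) :=
    Finite.of_injective (fun C : Submodule F (Fin (2*k) → F) => (C : Set (Fin (2*k) → F)))
      SetLike.coe_injective
  -- the two incidence sets
  let X := {p : Submodule F (Fin (2*k) → F) × (Fin (2*k) → F) //
    (finrank F p.1 = k ∧ hullDim p.1 = k - 1) ∧ p.2 ∈ p.1 ∧ Lsum F (2*k) p.2 = 1}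
  let Y := {p : Submodule F (Fin (2*k) → F) × (Fin (2*k) → F) //
    (finrank F p.1 = k ∧ hullDim p.1 = k) ∧ Lsum F (2*k) p.2 = 1}
  -- the bijection
  have e : X ≃ Y :=
    { toFun := fun p => ⟨((p.1.1 ⊓ dualCode p.1.1) ⊔ Submodule.span F {1}, p.1.2), by
        obtain ⟨⟨hr, hh⟩, hmem, hs⟩ := p.2
        have h := fwd hk hr hh hmem hs
        refine ⟨⟨h.1, ?_⟩, hs⟩
        show finrank F _ = k
        rw [h.2]
        exact h.1⟩
      invFun := fun p => ⟨((p.1.1 ⊓ LinearMap.ker (Bf F (2*k) p.1.2)) ⊔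
          Submodule.span F {p.1.2}, p.1.2), by
        obtain ⟨⟨hr, hh⟩, hs⟩ := p.2
        have h := bwd hk hr hh hs
        exact ⟨⟨h.1, h.2.1⟩, h.2.2.1, hs⟩⟩
      left_inv := fun p => by
        apply Subtype.ext
        rw [Prod.ext_iff]
        exact ⟨fwd_bwd hk p.2.1.1 p.2.1.2 p.2.2.1 p.2.2.2, rfl⟩
      right_inv := fun p => by
        apply Subtype.ext
        rw [Prod.ext_iff]
        exact ⟨(bwd hk p.2.1.1 p.2.1.2 p.2.2).2.2.2, rfl⟩ }
  -- counting X
  have hXsig : X ≃ Σ C : {C : Submodule F (Fin (2*k) → F) //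
      finrank F C = k ∧ hullDim C = k - 1},
      {c : Fin (2*k) → F // c ∈ C.1 ∧ Lsum F (2*k) c = 1} :=
    { toFun := fun p => ⟨⟨p.1.1, p.2.1⟩, ⟨p.1.2, p.2.2⟩⟩
      invFun := fun x => ⟨(x.1.1, x.2.1), ⟨x.1.2, x.2.2⟩⟩
      left_inv := fun p => rfl
      right_inv := fun x => rfl }
  have hXcard : Nat.card X = numCodes F (2*k) k (k-1) * q ^ (k - 1) := by
    rw [Nat.card_congr hXsig]
    refine nat_card_sigma_const (fun C => ?_)
    obtain ⟨c₀, hc₀, hs₀⟩ := exists_norm hk C.2.1 C.2.2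
    rw [card_norm C.1 (Lsum F (2*k)) hc₀ hs₀, hq, C.2.1]
  -- counting Y
  have hYprod : Y ≃ {C : Submodule F (Fin (2*k) → F) //
      finrank F C = k ∧ hullDim C = k} × {c : Fin (2*k) → F // Lsum F (2*k) c = 1} :=
    { toFun := fun p => (⟨p.1.1, p.2.1⟩, ⟨p.1.2, p.2.2⟩)
      invFun := fun x => ⟨(x.1.1, x.2.1), ⟨x.1.2, x.2.2⟩⟩
      left_inv := fun p => rfl
      right_inv := fun x => rfl }
  have hset : Nat.card {c : Fin (2*k) → F // Lsum F (2*k) c = 1} = q ^ (2*k - 1) := by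
    have e2 : {c : Fin (2*k) → F // Lsum F (2*k) c = 1} ≃
        {c : Fin (2*k) → F // c ∈ (⊤ : Submodule F _) ∧ Lsum F (2*k) c = 1} :=
      Equiv.subtypeEquivRight (fun c => by simp)
    rw [Nat.card_congr e2]
    have hw : (Pi.single (⟨0, by omega⟩ : Fin (2*k)) 1 : Fin (2*k) → F) ∈
        (⊤ : Submodule F _) := Submodule.mem_top
    have hfw : Lsum F (2*k) (Pi.single (⟨0, by omega⟩ : Fin (2*k)) 1) = 1 := by
      rw [Lsum_apply]
      simp [Pi.single_apply, Finset.sum_ite_eq']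
    rw [card_norm _ _ hw hfw, hq, finrank_top, finrank_pi]
    simp
  have hYcard : Nat.card Y = numCodes F (2*k) k k * q ^ (2*k - 1) := by
    rw [Nat.card_congr hYprod, Nat.card_prod, hset]
    rfl
  have hXY : Nat.card X = Nat.card Y := Nat.card_congr e
  rw [hXcard, hYcard] at hXY
  have hpow : q ^ (2*k - 1) = q ^ k * q ^ (k - 1) := by
    rw [← pow_add]
    congr 1
    omega
  rw [hpow, ← mul_assoc] at hXY
  have hqpos : 0 < q ^ (k - 1) := pow_pos (by omega) _
  have := Nat.eq_of_mul_eq_mul_right hqpos hXY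
  rw [this]
  ring
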